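/- For each k ∈ {1,...,n-1} and β_k ∈ [0,1), the multi-parameter geometric rule R^{β_k} with parameters αᵢ = 1 for i < k, α_k = β_k, αᵢ = 1/(n−i+1) for k < i < n, and α_n = 1, coincides with the additive rule R^{δ^k} defined by R^{δ^k}ᵢ(e) = δ^kᵢ eᵢ + Σ_{j<i} (1−δ^k_j)e_j/(n−j), where δ^kᵢ = 1 for i < k, δ^k_k = β_k, δ^kᵢ = 1/(n−i+1) for k < i < n, and δ^k_n = 1. -/

import Mathlib

open Finset

/-- Profile with nonnegative inflows. -/
def NonnegP (e : ℕ → ℝ) : Prop := ∀ i, 0 ≤ e i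

/-- `x` is the single-parameter geometric rule allocation with parameter `γ` for inflows `e`. -/
def GeomRec (n : ℕ) (γ : ℝ) (e x : ℕ → ℝ) : Prop :=
  x 1 = γ * e 1 ∧
  (∀ i, 1 < i → i < n → x i = γ * (e i + ∑ k ∈ Finset.Ico 1 i, (e k - x k))) ∧
  x n = e n + ∑ k ∈ Finset.Ico 1 n, (e k - x k)

/-- `x` is the multi-parameter geometric rule allocation with parameters `α` for inflows `e`. -/
def MultiGeomRec (n : ℕ) (α : ℕ → ℝ) (e x : ℕ → ℝ) : Prop :=
  ∀ i, 1 ≤ i → i ≤ n → x i = α i * (e i + ∑ k ∈ Finset.Ico 1 i, (e k - x k))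

/-- `R` maps each nonnegative profile to a feasible non-wasteful allocation. -/
def IsRule (n : ℕ) (R : (ℕ → ℝ) → ℕ → ℝ) : Prop :=
  ∀ e, NonnegP e → (∀ i, 0 ≤ R e i) ∧
    (∀ k, 1 ≤ k → k < n → ∑ i ∈ Finset.Icc 1 k, R e i ≤ ∑ i ∈ Finset.Icc 1 k, e i) ∧
    (∑ i ∈ Finset.Icc 1 n, R e i = ∑ i ∈ Finset.Icc 1 n, e i)

/-- Scale invariance. -/
def ScaleInv (R : (ℕ → ℝ) → ℕ → ℝ) : Prop :=
  ∀ e ρ, NonnegP e → 0 ≤ ρ → ∀ i, R (fun j => ρ * e j) i = ρ * R e i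

/-- Upstream invariance. -/
def UpInv (R : (ℕ → ℝ) → ℕ → ℝ) : Prop :=
  ∀ e e' i, NonnegP e → NonnegP e' → (∀ j, j ≠ i → e j = e' j) →
    ∀ k, k < i → R e k = R e' k

/-- The residual profile used in partial-implementation invariance:
coordinates below `i` zeroed, coordinate `i` gets its inflow plus unallocated upstream flow. -/
def resid (R : (ℕ → ℝ) → ℕ → ℝ) (e : ℕ → ℝ) (i : ℕ) : ℕ → ℝ :=
  fun j => if j = i then e i + ∑ k ∈ Finset.Ico 1 i, (e k - R e k)
    else if j < i then 0 else e j

/-- Partial-implementation invariance. -/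
def PII (n : ℕ) (R : (ℕ → ℝ) → ℕ → ℝ) : Prop :=
  ∀ e i, NonnegP e → 1 ≤ i → i ≤ n →
    ∀ j, i ≤ j → j ≤ n → R (resid R e i) j = R e j

/-- Downstream impartiality. -/
def DownImp (n : ℕ) (R : (ℕ → ℝ) → ℕ → ℝ) : Prop :=
  ∀ e e' i, NonnegP e → NonnegP e' → (∀ j, j ≠ i → e' j = e j) → e i < e' i →
    ∀ k l, i < k → i < l → k ≤ n → l ≤ n → e k = e l →
      R e' k - R e k = R e' l - R e l

/-- Neutrality. -/
def Neutral (n : ℕ) (R : (ℕ → ℝ) → ℕ → ℝ) : Prop :=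
  ∀ e i, NonnegP e → 1 ≤ i → i < n → 0 < e i → (∀ j, j ≠ i → e j = 0) →
    R e i = (1 / ((n : ℝ) - i)) * ∑ k ∈ Finset.Icc (i + 1) n, R e k

/-- Equal sources. -/
def EqSources (n : ℕ) (R : (ℕ → ℝ) → ℕ → ℝ) : Prop :=
  ∀ e e' s s', NonnegP e → NonnegP e' → 1 ≤ s → s < n → 1 ≤ s' → s' < n →
    0 < e s → 0 < e' s' → (∀ k, k < s → e k = 0) → (∀ k, k < s' → e' k = 0) →
    e s = e' s' → R e s = R e' s'

/-- Closed (product) form of the multi-parameter geometric rule. -/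
noncomputable def RmultiGeo (α : ℕ → ℝ) (e : ℕ → ℝ) (i : ℕ) : ℝ :=
  α i * (e i + ∑ k ∈ Finset.Ico 1 i, (∏ j ∈ Finset.Ico k i, (1 - α j)) * e k)

/-- The serial rule. -/
noncomputable def serial (n : ℕ) (e : ℕ → ℝ) (i : ℕ) : ℝ :=
  ∑ j ∈ Finset.Icc 1 i, e j / ((n : ℝ) - j + 1)

/-- Parameters of the `β`-family member `R^{β_k}`. -/
noncomputable def betaParam (n k : ℕ) (β : ℝ) : ℕ → ℝ :=
  fun i => if i < k then 1 else if i = k then β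
    else if i < n then 1 / ((n : ℝ) - i + 1) else 1

lemma tele (n : ℕ) : ∀ (b a : ℕ), a ≤ b → b ≤ n →
    ∏ r ∈ Finset.Ico a b, (((n:ℝ) - r)/((n:ℝ) - r + 1)) = ((n:ℝ) - b + 1)/((n:ℝ) - a + 1) := by
  intro b
  induction b with
  | zero =>
      intro a ha _
      interval_cases a
      rw [Finset.Ico_self, Finset.prod_empty, eq_comm, div_self]
      push_cast
      intro hc; linarith [Nat.cast_nonneg (α := ℝ) n]
  | succ b ih =>
    intro a ha hb
    rcases Nat.lt_or_ge a (b+1) with h | h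
    · have hab : a ≤ b := Nat.lt_succ_iff.mp h
      have hbn : b < n := hb
      rw [Finset.prod_Ico_succ_top hab, ih a hab (Nat.le_of_succ_le hb)]
      have h1 : (b:ℝ) < n := by exact_mod_cast hbn
      have h2 : (a:ℝ) ≤ n := by exact_mod_cast le_trans hab (Nat.le_of_lt hbn)
      have d1 : (n:ℝ) - b + 1 ≠ 0 := by linarith
      have d2 : (n:ℝ) - a + 1 ≠ 0 := by linarith
      push_cast
      field_simp
      ring
    · have : a = b + 1 := le_antisymm ha h
      subst this
      rw [Finset.Ico_self, Finset.prod_empty, eq_comm, div_self]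
      have : ((b:ℝ)+1) ≤ n := by exact_mod_cast hb
      push_cast
      intro hc; linarith

lemma key (n k : ℕ) (hk1 : 1 ≤ k) (hkn : k < n) (β : ℝ)
    (i j : ℕ) (hkj : k ≤ j) (hji : j < i) (hin : i ≤ n) :
    (∏ r ∈ Finset.Ico j i, (1 - betaParam n k β r)) =
      (1 - betaParam n k β j) * (((n:ℝ) - i + 1)/((n:ℝ) - j)) := by
  have hjn : j < n := lt_of_lt_of_le hji hin
  have hjR : (j:ℝ) < n := by exact_mod_cast hjn
  have hiR : (i:ℝ) ≤ n := by exact_mod_cast hin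
  have hprod : ∀ a, k < a → a ≤ i →
      ∏ r ∈ Finset.Ico a i, (1 - betaParam n k β r) = ((n:ℝ) - i + 1)/((n:ℝ) - a + 1) := by
    intro a hka hai
    rw [← tele n i a hai hin]
    apply Finset.prod_congr rfl
    intro r hr
    simp only [Finset.mem_Ico] at hr
    have hrn : r < n := lt_of_lt_of_le hr.2 hin
    have h1 : ¬ r < k := by omega
    have h2 : r ≠ k := by omega
    simp only [betaParam, if_neg h1, if_neg h2, if_pos hrn]
    have : (r:ℝ) < n := by exact_mod_cast hrn
    have d : (n:ℝ) - r + 1 ≠ 0 := by intro hc; linarith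
    field_simp
    ring
  rcases eq_or_lt_of_le hkj with h | h
  · subst h
    have hbk : betaParam n k β k = β := by
      simp [betaParam]
    rw [Finset.prod_eq_prod_Ico_succ_bot hji, hprod (k+1) (Nat.lt_succ_self k) hji, hbk]
    push_cast
    ring
  · have hbj : betaParam n k β j = 1 / ((n:ℝ) - j + 1) := by
      have h1 : ¬ j < k := by omega
      have h2 : j ≠ k := by omega
      simp [betaParam, if_neg h1, if_neg h2, if_pos hjn]
    rw [hprod j h (le_of_lt hji), hbj]
    have d1 : (n:ℝ) - j + 1 ≠ 0 := by intro hc; linarith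
    have d2 : (n:ℝ) - j ≠ 0 := by intro hc; linarith
    field_simp
    ring

theorem stmt16 (n : ℕ) (hn : 3 ≤ n) (k : ℕ) (hk1 : 1 ≤ k) (hkn : k < n)
    (β : ℝ) (hβ : 0 ≤ β ∧ β < 1) (e : ℕ → ℝ) (he : NonnegP e) :
    ∀ i, 1 ≤ i → i ≤ n →
      RmultiGeo (betaParam n k β) e i =
        betaParam n k β i * e i +
          ∑ j ∈ Finset.Ico 1 i, (1 - betaParam n k β j) * e j / ((n : ℝ) - j) := by
  intro i hi1 hin
  unfold RmultiGeo
  rw [mul_add, Finset.mul_sum]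
  congr 1
  apply Finset.sum_congr rfl
  intro j hj
  rw [Finset.mem_Ico] at hj
  by_cases hjk : j < k
  · have hz : betaParam n k β j = 1 := by simp [betaParam, hjk]
    have hp : (∏ r ∈ Finset.Ico j i, (1 - betaParam n k β r)) = 0 := by
      apply Finset.prod_eq_zero (Finset.mem_Ico.mpr ⟨le_refl j, hj.2⟩)
      rw [hz]; ring
    rw [hp, hz]; ring
  · have hkj : k ≤ j := not_lt.1 hjk
    have hik : k < i := lt_of_le_of_lt hkj hj.2
    have hαi : betaParam n k β i * ((n:ℝ) - i + 1) = 1 := by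
      by_cases hineq : i < n
      · have h1 : ¬ i < k := by omega
        have h2 : i ≠ k := by omega
        simp only [betaParam, if_neg h1, if_neg h2, if_pos hineq]
        have hiR : (i:ℝ) < n := by exact_mod_cast hineq
        have d : (n:ℝ) - i + 1 ≠ 0 := by intro hc; linarith
        field_simp
      · have hieq : i = n := le_antisymm hin (not_lt.1 hineq)
        subst hieq
        have h1 : ¬ i < k := by omega
        have h2 : i ≠ k := by omega
        simp only [betaParam, if_neg h1, if_neg h2, if_neg hineq]
        ring
    rw [key n k hk1 hkn β i j hkj hj.2 hin]
    linear_combination ((1 - betaParam n k β j) * e j / ((n:ℝ) - j)) * hαi
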